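/- arXiv:1208.0196 — 2 statements merged into one kernel-verified Lean document; each statement's English description precedes it below -/
import Mathlib

section
/- SO(2,ℝ) is a maximal compact subgroup of SL(2,ℝ): SO(2,ℝ) is a compact subgroup of SL(2,ℝ), and every compact subgroup K of SL(2,ℝ) with SO(2,ℝ) ≤ K satisfies K = SO(2,ℝ). -/
open Matrix

abbrev SL2R := Matrix.SpecialLinearGroup (Fin 2) ℝ

/-- `SO(2,ℝ)` as a subgroup of `SL(2,ℝ)`. -/
def SO2 : Subgroup SL2R where
  carrier := {g | ∃ x y : ℝ, x ^ 2 + y ^ 2 = 1 ∧ (g : Matrix (Fin 2) (Fin 2) ℝ) = !![x, -y; y, x]}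
  one_mem' := ⟨1, 0, by norm_num, by simp [Matrix.SpecialLinearGroup.coe_one, Matrix.one_fin_two]⟩
  mul_mem' := by
    rintro a b ⟨x, y, hxy, ha⟩ ⟨x', y', hxy', hb⟩
    refine ⟨x * x' - y * y', x * y' + y * x', by linear_combination (x' ^ 2 + y' ^ 2) * hxy + hxy', ?_⟩
    rw [Matrix.SpecialLinearGroup.coe_mul, ha, hb, Matrix.mul_fin_two]
    congr 1 <;> ring
  inv_mem' := by
    rintro a ⟨x, y, hxy, ha⟩
    refine ⟨x, -y, by linear_combination hxy, ?_⟩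
    rw [Matrix.SpecialLinearGroup.coe_inv, ha, Matrix.adjugate_fin_two]
    norm_num

/-- The topology on `SL(2,ℝ)` as a subspace of the space of 2×2 real matrices. -/
instance : TopologicalSpace SL2R :=
  TopologicalSpace.induced (fun g : SL2R => (g : Matrix (Fin 2) (Fin 2) ℝ)) inferInstance

lemma entry_cont (i j : Fin 2) :
    Continuous fun g : SL2R => (g : Matrix (Fin 2) (Fin 2) ℝ) i j :=
  (continuous_apply j).comp ((continuous_apply i).comp continuous_induced_dom)

/-- Entry bound on a compact subgroup. -/
lemma bound_of_compact (K : Subgroup SL2R) (hK : IsCompact (K : Set SL2R)) (i j : Fin 2) :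
    ∃ C : ℝ, ∀ g ∈ K, |(g : Matrix (Fin 2) (Fin 2) ℝ) i j| ≤ C := by
  obtain ⟨z, _, hmax⟩ := hK.exists_isMaxOn ⟨1, K.one_mem⟩
    ((continuous_abs.comp (entry_cont i j)).continuousOn)
  exact ⟨_, fun g hg => hmax hg⟩

lemma pow_form (v : SL2R) (t b s : ℝ)
    (h : (v : Matrix (Fin 2) (Fin 2) ℝ) = !![t, b; 0, s]) (k : ℕ) :
    ∃ c : ℝ, ((v ^ k : SL2R) : Matrix (Fin 2) (Fin 2) ℝ) = !![t ^ k, c; 0, s ^ k] := by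
  induction k with
  | zero => exact ⟨0, by simp [Matrix.SpecialLinearGroup.coe_one, Matrix.one_fin_two]⟩
  | succ k ih =>
    obtain ⟨c, hc⟩ := ih
    refine ⟨t ^ k * b + c * s, ?_⟩
    rw [pow_succ, Matrix.SpecialLinearGroup.coe_mul, hc, h, Matrix.mul_fin_two]
    congr 1 <;> ring

lemma unip_pow (v : SL2R) (b : ℝ)
    (h : (v : Matrix (Fin 2) (Fin 2) ℝ) = !![1, b; 0, 1]) (k : ℕ) :
    ((v ^ k : SL2R) : Matrix (Fin 2) (Fin 2) ℝ) = !![1, (k : ℝ) * b; 0, 1] := by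
  induction k with
  | zero => simp [Matrix.SpecialLinearGroup.coe_one, Matrix.one_fin_two]
  | succ k ih =>
    rw [pow_succ, Matrix.SpecialLinearGroup.coe_mul, ih, h, Matrix.mul_fin_two]
    congr 1 <;> push_cast <;> ring

lemma no_expanding (K : Subgroup SL2R) (hK : IsCompact (K : Set SL2R))
    (v : SL2R) (hv : v ∈ K) (t b : ℝ) (ht : 1 < t)
    (h : (v : Matrix (Fin 2) (Fin 2) ℝ) = !![t, b; 0, t⁻¹]) : False := by
  obtain ⟨C, hC⟩ := bound_of_compact K hK 0 0
  obtain ⟨k, hk⟩ := pow_unbounded_of_one_lt C ht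
  obtain ⟨c, hc⟩ := pow_form v t b t⁻¹ h k
  have h1 := hC (v ^ k) (pow_mem hv k)
  rw [hc] at h1
  simp only [Matrix.cons_val', Matrix.cons_val_zero, Matrix.empty_val',
    Matrix.cons_val_fin_one, Matrix.cons_val_one, Matrix.head_cons, Matrix.of_apply] at h1
  have : t ^ k ≤ |t ^ k| := le_abs_self _
  linarith

lemma no_unipotent (K : Subgroup SL2R) (hK : IsCompact (K : Set SL2R))
    (v : SL2R) (hv : v ∈ K) (b : ℝ) (hb : b ≠ 0)
    (h : (v : Matrix (Fin 2) (Fin 2) ℝ) = !![1, b; 0, 1]) : False := by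
  obtain ⟨C, hC⟩ := bound_of_compact K hK 0 1
  obtain ⟨k, hk⟩ := exists_nat_gt (C / |b|)
  have h1 := hC (v ^ k) (pow_mem hv k)
  rw [unip_pow v b h k] at h1
  simp only [Matrix.cons_val', Matrix.cons_val_zero, Matrix.empty_val',
    Matrix.cons_val_fin_one, Matrix.cons_val_one, Matrix.head_cons, Matrix.of_apply] at h1
  have hb' : 0 < |b| := abs_pos.2 hb
  rw [abs_mul, Nat.abs_cast] at h1
  have : C < (k : ℝ) * |b| := (div_lt_iff₀ hb').1 hk
  linarith

lemma so2_inducing : Topology.IsInducing (fun g : SL2R => (g : Matrix (Fin 2) (Fin 2) ℝ)) := ⟨rfl⟩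

/-- `SO(2,ℝ)` is a maximal compact subgroup of the topological group `SL(2,ℝ)`:
it is compact, and any compact subgroup of `SL(2,ℝ)` containing it equals it. -/
theorem so2_maximal_compact :
    IsCompact (SO2 : Set SL2R)
      ∧ ∀ K : Subgroup SL2R, IsCompact (K : Set SL2R) → SO2 ≤ K → K = SO2 := by
  constructor
  · -- compactness
    rw [so2_inducing.isCompact_iff]
    have hS : IsCompact {p : ℝ × ℝ | p.1 ^ 2 + p.2 ^ 2 = 1} := by
      apply Metric.isCompact_of_isClosed_isBounded
      · exact isClosed_eq (by fun_prop) continuous_const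
      · apply Bornology.IsBounded.subset (Metric.isBounded_closedBall (x := (0 : ℝ × ℝ)) (r := 1))
        intro p hp
        simp only [Set.mem_setOf_eq] at hp
        have h1 : |p.1| ≤ 1 := by nlinarith [sq_abs p.1, abs_nonneg p.1, sq_nonneg p.2]
        have h2 : |p.2| ≤ 1 := by nlinarith [sq_abs p.2, abs_nonneg p.2, sq_nonneg p.1]
        simp only [Metric.mem_closedBall, dist_zero_right, Prod.norm_def, Real.norm_eq_abs]
        exact max_le h1 h2
    have hcont : Continuous fun p : ℝ × ℝ => !![p.1, -p.2; p.2, p.1] := by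
      apply continuous_pi; intro i
      apply continuous_pi; intro j
      fin_cases i <;> fin_cases j <;> simp <;> fun_prop
    have himg : (fun g : SL2R => (g : Matrix (Fin 2) (Fin 2) ℝ)) '' (SO2 : Set SL2R)
        = (fun p : ℝ × ℝ => !![p.1, -p.2; p.2, p.1]) '' {p : ℝ × ℝ | p.1 ^ 2 + p.2 ^ 2 = 1} := by
      ext M
      constructor
      · rintro ⟨g, ⟨x, y, hxy, hg⟩, rfl⟩
        exact ⟨(x, y), hxy, hg.symm⟩
      · rintro ⟨⟨x, y⟩, hxy, rfl⟩
        simp only [Set.mem_setOf_eq] at hxy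
        refine ⟨⟨!![x, -y; y, x], ?_⟩, ⟨x, y, hxy, rfl⟩, rfl⟩
        rw [Matrix.det_fin_two_of]; nlinarith
    rw [himg]
    exact hS.image hcont
  · -- maximality
    intro K hK hle
    refine le_antisymm (fun g hg => ?_) hle
    -- notation for the entries of g
    set a : ℝ := (g : Matrix (Fin 2) (Fin 2) ℝ) 0 0 with ha
    set c : ℝ := (g : Matrix (Fin 2) (Fin 2) ℝ) 1 0 with hc
    have hdet : (g : Matrix (Fin 2) (Fin 2) ℝ).det = 1 := g.2
    rw [Matrix.det_fin_two] at hdet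
    have hac : 0 < a ^ 2 + c ^ 2 := by
      by_contra hcon
      push_neg at hcon
      have ha0 : a = 0 := by nlinarith [sq_nonneg a, sq_nonneg c]
      have hc0 : c = 0 := by nlinarith [sq_nonneg a, sq_nonneg c]
      rw [← ha, ← hc] at hdet
      rw [ha0, hc0] at hdet
      simp at hdet
    set n : ℝ := Real.sqrt (a ^ 2 + c ^ 2) with hn
    have hnpos : 0 < n := Real.sqrt_pos.2 hac
    have hn2 : n ^ 2 = a ^ 2 + c ^ 2 := Real.sq_sqrt hac.le
    set x : ℝ := a / n with hx
    set y : ℝ := c / n with hy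
    have hxy : x ^ 2 + y ^ 2 = 1 := by
      rw [hx, hy]; field_simp; linarith
    -- the rotation r
    have hdetr : (!![x, y; -y, x]).det = 1 := by
      rw [Matrix.det_fin_two_of]; nlinarith
    set r : SL2R := ⟨!![x, y; -y, x], hdetr⟩ with hr
    have hrSO2 : r ∈ SO2 := ⟨x, -y, by nlinarith, by norm_num; rfl⟩
    set u : SL2R := r * g with hu
    have huK : u ∈ K := K.mul_mem (hle hrSO2) hg
    -- entries of u
    have hu10 : (u : Matrix (Fin 2) (Fin 2) ℝ) 1 0 = 0 := by
      rw [hu, Matrix.SpecialLinearGroup.coe_mul, Matrix.mul_apply, Fin.sum_univ_two]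
      show (!![x, y; -y, x]) 1 0 * a + (!![x, y; -y, x]) 1 1 * c = 0
      simp only [Matrix.cons_val', Matrix.cons_val_zero, Matrix.empty_val',
        Matrix.cons_val_fin_one, Matrix.cons_val_one, Matrix.head_cons, Matrix.of_apply,
        Matrix.head_fin_const]
      rw [hx, hy]; field_simp; ring
    have hu00 : (u : Matrix (Fin 2) (Fin 2) ℝ) 0 0 = n := by
      rw [hu, Matrix.SpecialLinearGroup.coe_mul, Matrix.mul_apply, Fin.sum_univ_two]
      show (!![x, y; -y, x]) 0 0 * a + (!![x, y; -y, x]) 0 1 * c = n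
      simp only [Matrix.cons_val', Matrix.cons_val_zero, Matrix.empty_val',
        Matrix.cons_val_fin_one, Matrix.cons_val_one, Matrix.head_cons, Matrix.of_apply,
        Matrix.head_fin_const]
      rw [hx, hy]; field_simp; linarith
    have hudet : (u : Matrix (Fin 2) (Fin 2) ℝ).det = 1 := u.2
    rw [Matrix.det_fin_two, hu00, hu10] at hudet
    have hu11 : (u : Matrix (Fin 2) (Fin 2) ℝ) 1 1 = n⁻¹ := by
      field_simp
      linarith [hudet]
    set β : ℝ := (u : Matrix (Fin 2) (Fin 2) ℝ) 0 1 with hβ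
    have humat : (u : Matrix (Fin 2) (Fin 2) ℝ) = !![n, β; 0, n⁻¹] := by
      ext i j
      fin_cases i <;> fin_cases j <;>
        simp only [Matrix.cons_val', Matrix.cons_val_zero, Matrix.empty_val',
          Matrix.cons_val_fin_one, Matrix.cons_val_one, Matrix.head_cons, Matrix.of_apply,
          Matrix.head_fin_const]
      · exact hu00
      · exact hβ.symm
      · exact hu10
      · exact hu11
    -- show u ∈ SO2, hence g ∈ SO2
    have huSO2 : u ∈ SO2 := by
      rcases lt_trichotomy n 1 with hlt | heq | hgt
      · exfalso
        have hinv : ((u⁻¹ : SL2R) : Matrix (Fin 2) (Fin 2) ℝ) = !![n⁻¹, -β; 0, (n⁻¹)⁻¹] := by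
          rw [Matrix.SpecialLinearGroup.coe_inv, humat, Matrix.adjugate_fin_two, inv_inv]
          norm_num
        have ht : 1 < n⁻¹ := by
          nlinarith [mul_inv_cancel₀ hnpos.ne', inv_pos.2 hnpos]
        exact no_expanding K hK u⁻¹ (K.inv_mem huK) n⁻¹ (-β) ht hinv
      · by_cases hβ0 : β = 0
        · exact ⟨1, 0, by norm_num, by rw [humat, heq, hβ0]; norm_num⟩
        · exact absurd (no_unipotent K hK u huK β hβ0 (by rw [humat, heq]; norm_num)) not_false
      · exact absurd (no_expanding K hK u huK n β hgt humat) not_false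
    have hgeq : g = r⁻¹ * u := by rw [hu, inv_mul_cancel_left]
    exact hgeq ▸ SO2.mul_mem (SO2.inv_mem hrSO2) huSO2
end

section
/- The map t ↦ tH from SO(2,ℝ) to the coset space SL(2,ℝ)/H is a homeomorphism, where SL(2,ℝ)/H is the space of left cosets of the standard Borel subgroup H equipped with the quotient topology. -/
open Matrix

/-- The standard Borel subgroup `H` of `SL(2,ℝ)`: matrices `[[b, c], [0, b⁻¹]]`
with `b` a positive real and `c` a real. -/
def BorelH : Subgroup SL2R where
  carrier := {g | ∃ b c : ℝ, 0 < b ∧ (g : Matrix (Fin 2) (Fin 2) ℝ) = !![b, c; 0, b⁻¹]}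
  one_mem' := ⟨1, 0, one_pos, by simp [Matrix.SpecialLinearGroup.coe_one, Matrix.one_fin_two]⟩
  mul_mem' := by
    rintro a b ⟨b₁, c₁, hb₁, ha⟩ ⟨b₂, c₂, hb₂, hb⟩
    refine ⟨b₁ * b₂, b₁ * c₂ + c₁ * b₂⁻¹, mul_pos hb₁ hb₂, ?_⟩
    rw [Matrix.SpecialLinearGroup.coe_mul, ha, hb, Matrix.mul_fin_two]
    rw [mul_inv]
    congr 1 <;> ring
  inv_mem' := by
    rintro a ⟨b, c, hb, ha⟩
    refine ⟨b⁻¹, -c, inv_pos.mpr hb, ?_⟩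
    rw [Matrix.SpecialLinearGroup.coe_inv, ha, Matrix.adjugate_fin_two]
    norm_num

-- auxiliary development
lemma det2 (g : SL2R) : (g : Matrix (Fin 2) (Fin 2) ℝ) 0 0 * (g : Matrix (Fin 2) (Fin 2) ℝ) 1 1
    - (g : Matrix (Fin 2) (Fin 2) ℝ) 0 1 * (g : Matrix (Fin 2) (Fin 2) ℝ) 1 0 = 1 := by
  have h := g.2
  rwa [Matrix.det_fin_two] at h

lemma sq_add_pos (g : SL2R) :
    0 < (g : Matrix (Fin 2) (Fin 2) ℝ) 0 0 ^ 2 + (g : Matrix (Fin 2) (Fin 2) ℝ) 1 0 ^ 2 := by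
  have h : (g : Matrix (Fin 2) (Fin 2) ℝ) 0 0 ≠ 0 ∨ (g : Matrix (Fin 2) (Fin 2) ℝ) 1 0 ≠ 0 := by
    by_contra h
    push_neg at h
    have hd := det2 g
    rw [h.1, h.2] at hd
    norm_num at hd
  rcases h with h | h
  · positivity
  · positivity

noncomputable def rfn (g : SL2R) : ℝ :=
  Real.sqrt ((g : Matrix (Fin 2) (Fin 2) ℝ) 0 0 ^ 2 + (g : Matrix (Fin 2) (Fin 2) ℝ) 1 0 ^ 2)

lemma rfn_pos (g : SL2R) : 0 < rfn g := Real.sqrt_pos.mpr (sq_add_pos g)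

lemma rfn_sq (g : SL2R) :
    rfn g ^ 2 = (g : Matrix (Fin 2) (Fin 2) ℝ) 0 0 ^ 2 + (g : Matrix (Fin 2) (Fin 2) ℝ) 1 0 ^ 2 :=
  Real.sq_sqrt (sq_add_pos g).le

noncomputable def kSL (g : SL2R) : SL2R :=
  ⟨!![(g : Matrix (Fin 2) (Fin 2) ℝ) 0 0 / rfn g, -((g : Matrix (Fin 2) (Fin 2) ℝ) 1 0 / rfn g);
      (g : Matrix (Fin 2) (Fin 2) ℝ) 1 0 / rfn g, (g : Matrix (Fin 2) (Fin 2) ℝ) 0 0 / rfn g], by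
    rw [Matrix.det_fin_two_of]
    have hr := (rfn_pos g).ne'
    have h2 := rfn_sq g
    field_simp
    linarith [h2]⟩

noncomputable def kmap (g : SL2R) : SO2 :=
  ⟨kSL g, ⟨(g : Matrix (Fin 2) (Fin 2) ℝ) 0 0 / rfn g, (g : Matrix (Fin 2) (Fin 2) ℝ) 1 0 / rfn g,
    by
      have hr := (rfn_pos g).ne'
      have h2 := rfn_sq g
      field_simp
      linarith [h2], rfl⟩⟩


lemma kmap_mul (g h : SL2R) (hh : h ∈ BorelH) : kmap (g * h) = kmap g := by
  obtain ⟨b, c, hb, hco⟩ := hh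
  have ha : ((g * h : SL2R) : Matrix (Fin 2) (Fin 2) ℝ) 0 0
      = (g : Matrix (Fin 2) (Fin 2) ℝ) 0 0 * b := by
    rw [Matrix.SpecialLinearGroup.coe_mul, hco]
    simp [Matrix.mul_apply, Fin.sum_univ_two]
  have hc : ((g * h : SL2R) : Matrix (Fin 2) (Fin 2) ℝ) 1 0
      = (g : Matrix (Fin 2) (Fin 2) ℝ) 1 0 * b := by
    rw [Matrix.SpecialLinearGroup.coe_mul, hco]
    simp [Matrix.mul_apply, Fin.sum_univ_two]
  have hr : rfn (g * h) = b * rfn g := by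
    unfold rfn
    rw [ha, hc, show ((g : Matrix (Fin 2) (Fin 2) ℝ) 0 0 * b) ^ 2
        + ((g : Matrix (Fin 2) (Fin 2) ℝ) 1 0 * b) ^ 2
        = b ^ 2 * ((g : Matrix (Fin 2) (Fin 2) ℝ) 0 0 ^ 2
          + (g : Matrix (Fin 2) (Fin 2) ℝ) 1 0 ^ 2) from by ring,
      Real.sqrt_mul (sq_nonneg b), Real.sqrt_sq hb.le]
  have key : ∀ x : ℝ, x * b / (b * rfn g) = x / rfn g := fun x => by
    rw [mul_comm b (rfn g)]
    exact mul_div_mul_right x (rfn g) hb.ne'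
  apply Subtype.ext
  apply Subtype.ext
  show (!![((g * h : SL2R) : Matrix (Fin 2) (Fin 2) ℝ) 0 0 / rfn (g * h), _; _, _]
      : Matrix (Fin 2) (Fin 2) ℝ) = _
  rw [ha, hc, hr]
  simp only [key]
  rfl

lemma kmap_spec (g : SL2R) : ((kmap g : SL2R))⁻¹ * g ∈ BorelH := by
  refine ⟨rfn g, ((g : Matrix (Fin 2) (Fin 2) ℝ) 0 0 * (g : Matrix (Fin 2) (Fin 2) ℝ) 0 1
    + (g : Matrix (Fin 2) (Fin 2) ℝ) 1 0 * (g : Matrix (Fin 2) (Fin 2) ℝ) 1 1) / rfn g,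
    rfn_pos g, ?_⟩
  have hr := (rfn_pos g).ne'
  have h2 := rfn_sq g
  have hd := det2 g
  rw [Matrix.SpecialLinearGroup.coe_mul, Matrix.SpecialLinearGroup.coe_inv]
  ext i j
  fin_cases i <;> fin_cases j <;>
    simp [kmap, kSL, Matrix.adjugate_fin_two, Matrix.mul_apply, Fin.sum_univ_two]
  · field_simp
    linarith [h2]
  · field_simp
  · ring
  · field_simp
    linear_combination hd

lemma kmap_so2 (t : SL2R) (ht : t ∈ SO2) : (kmap t : SL2R) = t := by
  obtain ⟨x, y, hxy, hco⟩ := ht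
  have hx : (t : Matrix (Fin 2) (Fin 2) ℝ) 0 0 = x := by rw [hco]; simp
  have hy : (t : Matrix (Fin 2) (Fin 2) ℝ) 1 0 = y := by rw [hco]; simp
  have hr : rfn t = 1 := by
    unfold rfn
    rw [hx, hy, hxy, Real.sqrt_one]
  apply Subtype.ext
  show (!![(t : Matrix (Fin 2) (Fin 2) ℝ) 0 0 / rfn t, -((t : Matrix (Fin 2) (Fin 2) ℝ) 1 0 / rfn t);
      (t : Matrix (Fin 2) (Fin 2) ℝ) 1 0 / rfn t, (t : Matrix (Fin 2) (Fin 2) ℝ) 0 0 / rfn t]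
      : Matrix (Fin 2) (Fin 2) ℝ) = (t : Matrix (Fin 2) (Fin 2) ℝ)
  rw [hx, hy, hr, hco]
  norm_num

lemma cont_coe : Continuous (fun g : SL2R => (g : Matrix (Fin 2) (Fin 2) ℝ)) :=
  continuous_induced_dom

lemma cont_rfn : Continuous rfn :=
  Real.continuous_sqrt.comp (((cont_coe.matrix_elem 0 0).pow 2).add ((cont_coe.matrix_elem 1 0).pow 2))

lemma cont_kmap : Continuous kmap := by
  apply Continuous.subtype_mk
  apply continuous_induced_rng.2
  have h00 := cont_coe.matrix_elem 0 0
  have h10 := cont_coe.matrix_elem 1 0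
  have hrne : ∀ g : SL2R, rfn g ≠ 0 := fun g => (rfn_pos g).ne'
  show Continuous fun g : SL2R => ((kSL g : Matrix (Fin 2) (Fin 2) ℝ))
  apply continuous_matrix
  intro i j
  fin_cases i <;> fin_cases j <;> simp [kSL]
  · exact h00.div cont_rfn hrne
  · exact (h10.div cont_rfn hrne).neg
  · exact h10.div cont_rfn hrne
  · exact h00.div cont_rfn hrne

noncomputable def psi : SL2R ⧸ BorelH → SO2 :=
  Quotient.lift kmap (fun a b hab => by
    have h : a⁻¹ * b ∈ BorelH := QuotientGroup.leftRel_apply.mp hab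
    have hb : b = a * (a⁻¹ * b) := by group
    rw [hb, kmap_mul a _ h])


/-- The map `t ↦ tH` is a homeomorphism from `SO(2,ℝ)` onto the space
`SL(2,ℝ)/H` of left cosets of the standard Borel subgroup `H`, equipped with
the quotient topology. -/
theorem so2_homeo_quotient_borel :
    ∃ e : SO2 ≃ₜ (SL2R ⧸ BorelH), ∀ t : SO2, e t = QuotientGroup.mk (t : SL2R) := by
  refine ⟨{ toFun := fun t => QuotientGroup.mk (t : SL2R)
            invFun := psi
            left_inv := fun t => Subtype.ext (kmap_so2 (t : SL2R) t.2)
            right_inv := fun q => QuotientGroup.induction_on q fun g =>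
              QuotientGroup.eq.mpr (kmap_spec g)
            continuous_toFun := continuous_quotient_mk'.comp continuous_subtype_val
            continuous_invFun := cont_kmap.quotient_lift _ }, fun t => rfl⟩
end
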